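/- Let G be a countable group generated by elements a and b satisfying relations (i) (w₁ a^m w₁⁻¹) b^{-r} (w₂⁻¹ a^n w₂) b^{r-k} = 1, (ii) a L = L a where L = a^{-s} w a^{-t}, and (iii) a^p L^q = 1, where w₁, w₂ ∈ G are arbitrary, m, n ≥ 0 with m + n ≥ 1, r ∈ ℤ, k ≥ 0, w is a product of nonnegative powers of a and b containing at least one b, and s, t, p, q ∈ ℤ with q ≠ 0 and p/q ≥ s + t. Then G is not left-orderable. -/

import Mathlib

open Set

set_option linter.unusedSectionVars false

section LOAux

variable {G : Type*} [Group G]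

def actL (g : G) (S : Set G) : Set G := {x | g⁻¹ * x ∈ S}

theorem actL_one (S : Set G) : actL (1 : G) S = S := by ext x; simp [actL]

theorem actL_mul (g h : G) (S : Set G) : actL (g * h) S = actL g (actL h S) := by
  ext x; simp [actL, mul_assoc]

theorem actL_mono (g : G) {S T : Set G} (h : S ⊆ T) : actL g S ⊆ actL g T :=
  fun _ hx => h hx

theorem actL_inv_actL (g : G) (S : Set G) : actL g⁻¹ (actL g S) = S := by
  rw [← actL_mul]; simp [actL_one]

theorem actL_actL_inv (g : G) (S : Set G) : actL g (actL g⁻¹ S) = S := by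
  rw [← actL_mul]; simp [actL_one]

theorem actL_subset_iff {g : G} {S T : Set G} : actL g S ⊆ actL g T ↔ S ⊆ T := by
  constructor
  · intro h
    have := actL_mono g⁻¹ h
    rwa [actL_inv_actL, actL_inv_actL] at this
  · exact actL_mono g

theorem actL_ssubset_iff {g : G} {S T : Set G} : actL g S ⊂ actL g T ↔ S ⊂ T := by
  constructor
  · rintro ⟨h1, h2⟩
    exact ⟨actL_subset_iff.1 h1, fun hc => h2 (actL_mono g hc)⟩
  · rintro ⟨h1, h2⟩
    exact ⟨actL_mono g h1, fun hc => h2 (actL_subset_iff.1 hc)⟩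

-- pow lemmas
theorem subset_actL_pow {g : G} {S : Set G} (h : S ⊆ actL g S) (n : ℕ) :
    S ⊆ actL (g ^ n) S := by
  induction n with
  | zero => simp [actL_one]
  | succ n ih =>
    rw [pow_succ, actL_mul]
    exact ih.trans (actL_mono _ h)

theorem ssubset_actL_pow {g : G} {S : Set G} (h : S ⊂ actL g S) {n : ℕ} (hn : 1 ≤ n) :
    S ⊂ actL (g ^ n) S := by
  obtain ⟨n, rfl⟩ := Nat.exists_eq_add_of_le hn
  rw [add_comm, pow_succ, actL_mul]
  have h2 : actL g S ⊆ actL (g ^ n) (actL g S) :=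
    subset_actL_pow (actL_mono g h.subset) n
  exact h.trans_subset h2

theorem subset_actL_zpow {g : G} {S : Set G} (h : S ⊆ actL g S) {z : ℤ} (hz : 0 ≤ z) :
    S ⊆ actL (g ^ z) S := by
  lift z to ℕ using hz
  rw [zpow_natCast]
  exact subset_actL_pow h z

theorem ssubset_actL_zpow {g : G} {S : Set G} (h : S ⊂ actL g S) {z : ℤ} (hz : 1 ≤ z) :
    S ⊂ actL (g ^ z) S := by
  lift z to ℕ using le_trans zero_le_one hz
  rw [zpow_natCast]
  exact ssubset_actL_pow h (by exact_mod_cast hz)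

theorem actL_swap_inv {g : G} {S : Set G} (h : actL g S ⊆ S) : S ⊆ actL g⁻¹ S := by
  have := actL_mono g⁻¹ h
  rwa [actL_inv_actL] at this

theorem actL_swap_inv' {g : G} {S : Set G} (h : S ⊆ actL g S) : actL g⁻¹ S ⊆ S := by
  have := actL_mono g⁻¹ h
  rwa [actL_inv_actL] at this

theorem actL_swap_inv_ssubset {g : G} {S : Set G} (h : actL g S ⊂ S) : S ⊂ actL g⁻¹ S := by
  have := (actL_ssubset_iff (g := g⁻¹)).2 h
  rwa [actL_inv_actL] at this

theorem actL_pow_subset {g : G} {S : Set G} (h : actL g S ⊆ S) {z : ℤ} (hz : 0 ≤ z) :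
    actL (g ^ z) S ⊆ S := by
  have h1 : S ⊆ actL (g⁻¹ ^ z) S := subset_actL_zpow (actL_swap_inv h) hz
  have := actL_mono (g ^ z) h1
  rwa [← actL_mul, inv_zpow, mul_inv_cancel, actL_one] at this

theorem actL_zpow_ssubset {g : G} {S : Set G} (h : actL g S ⊂ S) {z : ℤ} (hz : 1 ≤ z) :
    actL (g ^ z) S ⊂ S := by
  have h1 : S ⊂ actL (g⁻¹ ^ z) S := ssubset_actL_zpow (actL_swap_inv_ssubset h) hz
  have := (actL_ssubset_iff (g := g ^ z)).2 h1
  rwa [← actL_mul, inv_zpow, mul_inv_cancel, actL_one] at this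

/-- If `S` strictly goes up under `g`, then `g^q` does not fix `S`, for `q ≠ 0`. -/
theorem actL_zpow_ne_of_up {g : G} {S : Set G} (h : S ⊂ actL g S) {z : ℤ} (hz : z ≠ 0) :
    actL (g ^ z) S ≠ S := by
  rcases hz.lt_or_gt with h' | h'
  · have h1 : actL g⁻¹ S ⊂ S := by
      have := (actL_ssubset_iff (g := g⁻¹)).2 h
      rwa [actL_inv_actL] at this
    have h2 : actL (g⁻¹ ^ (-z)) S ⊂ S := actL_zpow_ssubset h1 (by omega)
    rw [inv_zpow, ← zpow_neg, neg_neg] at h2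
    exact h2.ne
  · exact (ssubset_actL_zpow h (by omega)).ne'

theorem actL_zpow_ne_of_down {g : G} {S : Set G} (h : actL g S ⊂ S) {z : ℤ} (hz : z ≠ 0) :
    actL (g ^ z) S ≠ S := by
  have h1 : S ⊂ actL g⁻¹ S := actL_swap_inv_ssubset h
  have h2 := actL_zpow_ne_of_up h1 (z := -z) (by omega)
  rwa [inv_zpow, ← zpow_neg, neg_neg] at h2


theorem actL_nonempty (g : G) {S : Set G} (h : S.Nonempty) : (actL g S).Nonempty := by
  obtain ⟨x, hx⟩ := h
  refine ⟨g * x, ?_⟩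
  show g⁻¹ * (g * x) ∈ S
  simpa using hx

theorem actL_univ (g : G) : actL g (Set.univ : Set G) = Set.univ := by
  ext x; simp [actL]

theorem actL_ne_univ (g : G) {S : Set G} (h : S ≠ Set.univ) : actL g S ≠ Set.univ := by
  intro hc
  apply h
  have : actL g⁻¹ (actL g S) = actL g⁻¹ Set.univ := by rw [hc]
  rwa [actL_inv_actL, actL_univ] at this

/-- The subgroup of elements fixing a set under `actL`. -/
def fixerL (S : Set G) : Subgroup G where
  carrier := {g | actL g S = S}
  one_mem' := actL_one S
  mul_mem' := by
    intro g h hg hh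
    simp only [Set.mem_setOf_eq] at *
    rw [actL_mul, hh, hg]
  inv_mem' := by
    intro g hg
    simp only [Set.mem_setOf_eq] at *
    conv_lhs => rw [← hg]
    exact actL_inv_actL g S

theorem actL_eq_of_mem_fixerL {S : Set G} {g : G} (h : g ∈ fixerL S) : actL g S = S := h

/-- Word lemma: if `a` fixes `S` and `b` strictly increases `S`, then any positive word
in `a, b` weakly increases `S`, strictly if it contains `b`. -/
theorem word_up {a b : G} {S : Set G} (hfa : actL a S = S) (hb : S ⊂ actL b S)
    (l : List G) (hl : ∀ c ∈ l, c = a ∨ c = b) :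
    S ⊆ actL l.prod S ∧ (b ∈ l → S ⊂ actL l.prod S) := by
  induction l with
  | nil => simp [actL_one]
  | cons c rest ih =>
    have hrest := ih (fun c hc => hl c (List.mem_cons_of_mem _ hc))
    rw [List.prod_cons, actL_mul]
    have hmono : actL c S ⊆ actL c (actL rest.prod S) := actL_mono c hrest.1
    constructor
    · rcases hl c (List.mem_cons_self) with rfl | rfl
      · calc S = actL c S := hfa.symm
          _ ⊆ _ := hmono
      · exact (hb.subset.trans hmono)
    · intro hbmem
      rcases List.mem_cons.1 hbmem with rfl | hbrest
      · exact hb.trans_subset hmono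
      · rcases hl c (List.mem_cons_self) with rfl | rfl
        · calc S = actL c S := hfa.symm
            _ ⊂ _ := (actL_ssubset_iff (g := c)).2 (hrest.2 hbrest)
        · exact hb.trans_subset hmono

section Order

variable [LinearOrder G]

theorem IsLowerSet.actL' (hcov : ∀ u v x : G, u < v → x * u < x * v)
    {S : Set G} (hS : IsLowerSet S) (g : G) : IsLowerSet (actL g S) := by
  intro x y hyx hx
  have : g⁻¹ * y ≤ g⁻¹ * x := by
    rcases lt_or_eq_of_le hyx with h | h
    · exact (hcov _ _ _ h).le
    · rw [h]
  exact hS this hx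

theorem lower_total {S T : Set G} (hS : IsLowerSet S) (hT : IsLowerSet T) :
    S ⊆ T ∨ T ⊆ S := by
  by_cases h : S ⊆ T
  · exact Or.inl h
  · right
    rw [Set.not_subset] at h
    obtain ⟨x, hxS, hxT⟩ := h
    intro y hy
    rcases le_total y x with hle | hle
    · exact hS hle hxS
    · exact absurd (hT hle hy) hxT

/-- Case B': there is a proper lower set fixed by `a`: contradiction. -/
theorem main_fixed (hcov : ∀ u v x : G, u < v → x * u < x * v)
    {a b : G} (hgen : Subgroup.closure ({a, b} : Set G) = ⊤)
    {w : G} {l : List G} (hl : ∀ c ∈ l, c = a ∨ c = b) (hbl : b ∈ l) (hw : w = l.prod)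
    {P q : ℤ} (hq : q ≠ 0) (hPw : a ^ P * w ^ q = 1)
    {S : Set G} (hSl : IsLowerSet S) (hSne : S.Nonempty) (hSnu : S ≠ Set.univ)
    (hfix : actL a S = S) : False := by
  have ha : a ∈ fixerL S := hfix
  -- w ^ q = a ^ (-P) fixes S
  have hwq : actL (w ^ q) S = S := by
    have h1 : w ^ q = a ^ (-P) := by
      have : a ^ (-P) * (a ^ P * w ^ q) = a ^ (-P) := by rw [hPw, mul_one]
      rw [← this]; group
    rw [h1]
    exact actL_eq_of_mem_fixerL (Subgroup.zpow_mem _ ha (-P))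
  -- w fixes S
  have hwfix : actL w S = S := by
    by_contra hne
    rcases lower_total (hSl.actL' hcov w) hSl with hsub | hsub
    · exact actL_zpow_ne_of_down ⟨hsub, fun hc => hne (subset_antisymm hsub hc)⟩ hq hwq
    · exact actL_zpow_ne_of_up ⟨hsub, fun hc => hne (subset_antisymm hc hsub)⟩ hq hwq
  -- b fixes S
  have hbfix : actL b S = S := by
    by_contra hne
    rcases lower_total (hSl.actL' hcov b) hSl with hsub | hsub
    · -- actL b S ⊆ S : use inverse word
      have hb' : S ⊂ actL b⁻¹ S :=
        actL_swap_inv_ssubset ⟨hsub, fun hc => hne (subset_antisymm hsub hc)⟩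
      have ha' : actL a⁻¹ S = S := actL_eq_of_mem_fixerL (Subgroup.inv_mem _ ha)
      set l' : List G := (l.map fun x => x⁻¹).reverse with hl'def
      have hl' : ∀ c ∈ l', c = a⁻¹ ∨ c = b⁻¹ := by
        intro c hc
        rw [hl'def, List.mem_reverse, List.mem_map] at hc
        obtain ⟨d, hd, rfl⟩ := hc
        rcases hl d hd with rfl | rfl
        · exact Or.inl rfl
        · exact Or.inr rfl
      have hbl' : b⁻¹ ∈ l' := by
        rw [hl'def, List.mem_reverse, List.mem_map]
        exact ⟨b, hbl, rfl⟩
      have hword := (word_up ha' hb' l' hl').2 hbl'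
      have : l'.prod = w⁻¹ := by
        rw [hl'def, hw, List.prod_inv_reverse]
      rw [this] at hword
      have : actL w⁻¹ S = S := actL_eq_of_mem_fixerL (Subgroup.inv_mem _ (hwfix : w ∈ fixerL S))
      rw [this] at hword
      exact hword.ne rfl
    · have hb' : S ⊂ actL b S := ⟨hsub, fun hc => hne (subset_antisymm hc hsub)⟩
      have hword := (word_up hfix hb' l hl).2 hbl
      rw [← hw, hwfix] at hword
      exact hword.ne rfl
  -- every element fixes S
  have hall : ∀ g : G, actL g S = S := by
    have hle : Subgroup.closure ({a, b} : Set G) ≤ fixerL S := by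
      rw [Subgroup.closure_le]
      rintro x (rfl | rfl)
      · exact hfix
      · exact hbfix
    rw [hgen] at hle
    intro g
    exact actL_eq_of_mem_fixerL (hle (Subgroup.mem_top g))
  -- contradiction with properness
  apply hSnu
  obtain ⟨x, hx⟩ := hSne
  ext y
  simp only [Set.mem_univ, iff_true]
  have := hall (y * x⁻¹)
  rw [← this]
  show (y * x⁻¹)⁻¹ * y ∈ S
  simpa [mul_assoc] using hx

/-- Strict word lemma when both letters strictly increase every proper lower set. -/
theorem word_up_all (hcov : ∀ u v x : G, u < v → x * u < x * v) {a b : G}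
    (hA : ∀ S : Set G, IsLowerSet S → S.Nonempty → S ≠ Set.univ → S ⊂ actL a S)
    (hB : ∀ S : Set G, IsLowerSet S → S.Nonempty → S ≠ Set.univ → S ⊂ actL b S) :
    ∀ l : List G, l ≠ [] → (∀ c ∈ l, c = a ∨ c = b) →
      ∀ S : Set G, IsLowerSet S → S.Nonempty → S ≠ Set.univ → S ⊂ actL l.prod S := by
  intro l
  induction l with
  | nil => intro h; exact absurd rfl h
  | cons c rest ih =>
    intro _ hl S hSl hSne hSnu
    rw [List.prod_cons, actL_mul]
    have hc : c = a ∨ c = b := hl c (List.mem_cons_self)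
    rcases eq_or_ne rest [] with rfl | hne
    · have : actL (List.prod ([] : List G)) S = S := by rw [List.prod_nil, actL_one]
      rw [this]
      rcases hc with rfl | rfl
      · exact hA S hSl hSne hSnu
      · exact hB S hSl hSne hSnu
    · have hX := ih hne (fun d hd => hl d (List.mem_cons_of_mem _ hd)) S hSl hSne hSnu
      have hXl : IsLowerSet (actL rest.prod S) := hSl.actL' hcov _
      have hXne : (actL rest.prod S).Nonempty := actL_nonempty _ hSne
      have hXnu : actL rest.prod S ≠ Set.univ := actL_ne_univ _ hSnu
      have h2 : actL rest.prod S ⊂ actL c (actL rest.prod S) := by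
        rcases hc with rfl | rfl
        · exact hA _ hXl hXne hXnu
        · exact hB _ hXl hXne hXnu
      exact hX.trans h2

/-- Config 1: an up-set below a down-set yields a fixed proper lower set. -/
theorem config1 (hcov : ∀ u v x : G, u < v → x * u < x * v) {a : G}
    (hnofix : ∀ S : Set G, IsLowerSet S → S.Nonempty → S ≠ Set.univ → actL a S ≠ S)
    {U V : Set G} (hUl : IsLowerSet U) (hUne : U.Nonempty) (hUup : U ⊆ actL a U)
    (hVl : IsLowerSet V) (hVnu : V ≠ Set.univ) (hVdn : actL a V ⊆ V) (hUV : U ⊆ V) :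
    False := by
  set F : Set (Set G) := {T | IsLowerSet T ∧ U ⊆ T ∧ T ⊆ V ∧ T ⊆ actL a T} with hF
  set Z : Set G := {x | ∃ T ∈ F, x ∈ T} with hZdef
  have hUF : U ∈ F := ⟨hUl, le_refl _, hUV, hUup⟩
  have hZl : IsLowerSet Z := by
    rintro x y hxy ⟨T, hT, hxT⟩
    exact ⟨T, hT, hT.1 hxy hxT⟩
  have hUZ : U ⊆ Z := fun x hx => ⟨U, hUF, hx⟩
  have hZV : Z ⊆ V := by rintro x ⟨T, hT, hxT⟩; exact hT.2.2.1 hxT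
  have hZup : Z ⊆ actL a Z := by
    rintro x ⟨T, hT, hxT⟩
    exact actL_mono a (show T ⊆ Z from fun y hy => ⟨T, hT, hy⟩) (hT.2.2.2 hxT)
  have hZdn : actL a Z ⊆ Z := by
    intro x hx
    obtain ⟨T, hT, hxT⟩ := hx
    refine ⟨actL a T, ⟨hT.1.actL' hcov a, hT.2.1.trans hT.2.2.2,
      (actL_mono a hT.2.2.1).trans hVdn, actL_mono a hT.2.2.2⟩, hxT⟩
  exact hnofix Z hZl (hUne.mono hUZ)
    (fun h => hVnu (Set.univ_subset_iff.1 (h ▸ hZV)))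
    (subset_antisymm hZdn hZup)

/-- If both a strict up-set and a strict down-set exist, contradiction. -/
theorem config_both (hcov : ∀ u v x : G, u < v → x * u < x * v) {a : G}
    (hnofix : ∀ S : Set G, IsLowerSet S → S.Nonempty → S ≠ Set.univ → actL a S ≠ S)
    {U : Set G} (hUl : IsLowerSet U) (hUne : U.Nonempty) (hUnu : U ≠ Set.univ)
    (hUup : U ⊆ actL a U)
    {V : Set G} (hVl : IsLowerSet V) (hVne : V.Nonempty) (hVnu : V ≠ Set.univ)
    (hVdn : actL a V ⊆ V) : False := by
  by_cases hex : ∃ T : Set G, IsLowerSet T ∧ T.Nonempty ∧ T ≠ Set.univ ∧ actL a T ⊆ T ∧ U ⊆ T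
  · obtain ⟨T, hTl, _, hTnu, hTdn, hUT⟩ := hex
    exact config1 hcov hnofix hUl hUne hUup hTl hTnu hTdn hUT
  · push_neg at hex
    set D : Set (Set G) := {T | IsLowerSet T ∧ T.Nonempty ∧ T ≠ Set.univ ∧ actL a T ⊆ T}
      with hD
    set Z : Set G := {x | ∃ T ∈ D, x ∈ T} with hZdef
    have hVD : V ∈ D := ⟨hVl, hVne, hVnu, hVdn⟩
    have hTU : ∀ T ∈ D, T ⊆ U := by
      intro T hT
      rcases lower_total hT.1 hUl with h | h
      · exact h
      · exact absurd h (hex T hT.1 hT.2.1 hT.2.2.1 hT.2.2.2)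
    have hZl : IsLowerSet Z := by
      rintro x y hxy ⟨T, hT, hxT⟩
      exact ⟨T, hT, hT.1 hxy hxT⟩
    have hZne : Z.Nonempty := hVne.mono (fun x hx => ⟨V, hVD, hx⟩)
    have hZU : Z ⊆ U := by rintro x ⟨T, hT, hxT⟩; exact hTU T hT hxT
    have hZnu : Z ≠ Set.univ := fun h => hUnu (Set.univ_subset_iff.1 (h ▸ hZU))
    have hne := hnofix Z hZl hZne hZnu
    rcases lower_total (hZl.actL' hcov a) hZl with hdn | hup
    · -- actL a Z ⊂ Z : build the fixed set E = ⋂ actL (a⁻¹^j) U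
      have hzeta : Z ⊆ actL a⁻¹ Z := actL_swap_inv hdn
      have hclaim : ∀ j : ℕ, Z ⊆ actL (a⁻¹ ^ j) U := by
        intro j
        induction j with
        | zero => simpa [actL_one] using hZU
        | succ j ihj =>
          rw [pow_succ', actL_mul]
          exact hzeta.trans (actL_mono a⁻¹ ihj)
      set E : Set G := ⋂ j : ℕ, actL (a⁻¹ ^ j) U with hE
      have hEU : E ⊆ U := by
        intro x hx
        have := Set.mem_iInter.1 hx 0
        simpa [actL_one] using this
      have hZE : Z ⊆ E := by
        intro x hx
        exact Set.mem_iInter.2 fun j => hclaim j hx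
      have hEl : IsLowerSet E := by
        intro x y hxy hx
        exact Set.mem_iInter.2 fun j =>
          ((hUl.actL' hcov (a⁻¹ ^ j))) hxy (Set.mem_iInter.1 hx j)
      have hdnU : actL a⁻¹ U ⊆ U := by
        rcases lower_total (hUl.actL' hcov a⁻¹) hUl with h | h
        · exact h
        · -- U ⊆ actL a⁻¹ U means actL a U ⊆ U, fine too: then both; just use:
          have : actL a U ⊆ U := by
            have := actL_mono a h
            rwa [actL_actL_inv] at this
          -- combined with hUup, a fixes U: contradiction with hnofix
          exact absurd (subset_antisymm this hUup) (hnofix U hUl hUne hUnu)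
      have hmemE : ∀ x : G, x ∈ E ↔ ∀ j : ℕ, a ^ j * x ∈ U := by
        intro x
        rw [hE, Set.mem_iInter]
        apply forall_congr'
        intro j
        show (a⁻¹ ^ j)⁻¹ * x ∈ U ↔ _
        rw [inv_pow, inv_inv]
      have hfixE : actL a⁻¹ E = E := by
        apply subset_antisymm
        · intro x hx
          have hx2 : a * x ∈ E := by
            have h0 : (a⁻¹)⁻¹ * x ∈ E := hx
            rwa [inv_inv] at h0
          have hx' : ∀ j : ℕ, a ^ j * (a * x) ∈ U := (hmemE _).1 hx2
          refine (hmemE x).2 fun j => ?_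
          rcases j with _ | j
          · -- x ∈ U from a * x ∈ U and hdnU
            have h1 : a ^ 0 * (a * x) ∈ U := hx' 0
            rw [pow_zero, one_mul] at h1
            have : x ∈ actL a⁻¹ U := by
              show (a⁻¹)⁻¹ * x ∈ U
              rwa [inv_inv]
            exact (by simpa using hdnU this)
          · have := hx' j
            rw [show a ^ j * (a * x) = a ^ (j + 1) * x by rw [pow_succ]; group] at this
            simpa using this
        · intro x hx
          show (a⁻¹)⁻¹ * x ∈ E
          rw [inv_inv]
          refine (hmemE _).2 fun j => ?_
          have := (hmemE x).1 hx (j + 1)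
          rw [show a ^ (j + 1) * x = a ^ j * (a * x) by rw [pow_succ]; group] at this
          exact this
      have hEfix : actL a E = E := by
        conv_lhs => rw [← hfixE]
        exact actL_actL_inv a E
      exact hnofix E hEl (hZne.mono hZE) (fun h => hUnu (Set.univ_subset_iff.1 (h ▸ hEU)))
        hEfix
    · -- Z ⊂ actL a Z
      have hstrict : Z ⊂ actL a Z := lt_of_le_of_ne hup (fun hc => hne hc.symm)
      have h1 : actL a⁻¹ Z ⊂ Z := by
        have := (actL_ssubset_iff (g := a⁻¹)).2 hstrict
        rwa [actL_inv_actL] at this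
      obtain ⟨T, hTD, hTnot⟩ : ∃ T ∈ D, ¬ T ⊆ actL a⁻¹ Z := by
        by_contra hc
        push_neg at hc
        have : Z ⊆ actL a⁻¹ Z := by
          rintro x ⟨T, hT, hxT⟩
          exact hc T hT hxT
        exact absurd (subset_antisymm h1.subset this) h1.ne
      have h3 : actL a⁻¹ Z ⊆ T :=
        (lower_total hTD.1 (hZl.actL' hcov a⁻¹)).resolve_left hTnot
      have h4 : Z ⊆ actL a T := by
        have := actL_mono a h3
        rwa [actL_actL_inv] at this
      have h5 : T ⊆ Z := fun x hx => ⟨T, hTD, hx⟩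
      have h6 : Z = T := subset_antisymm (h4.trans hTD.2.2.2) h5
      rw [h6] at hne hup
      exact hne (subset_antisymm hTD.2.2.2 hup)

/-- Dichotomy: if `a` fixes no proper lower set, it moves all of them uniformly. -/
theorem uniform (hcov : ∀ u v x : G, u < v → x * u < x * v) {a : G}
    (hnofix : ∀ S : Set G, IsLowerSet S → S.Nonempty → S ≠ Set.univ → actL a S ≠ S) :
    (∀ S : Set G, IsLowerSet S → S.Nonempty → S ≠ Set.univ → S ⊂ actL a S) ∨
    (∀ S : Set G, IsLowerSet S → S.Nonempty → S ≠ Set.univ → actL a S ⊂ S) := by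
  by_cases h1 : ∃ U : Set G, IsLowerSet U ∧ U.Nonempty ∧ U ≠ Set.univ ∧ U ⊂ actL a U
  · left
    intro S hSl hSne hSnu
    rcases lower_total (hSl.actL' hcov a) hSl with hdn | hup
    · obtain ⟨U, hUl, hUne, hUnu, hUup⟩ := h1
      exact absurd (config_both hcov hnofix hUl hUne hUnu hUup.subset hSl hSne hSnu hdn)
        not_false
    · exact lt_of_le_of_ne hup (fun hc => hnofix S hSl hSne hSnu hc.symm)
  · right
    intro S hSl hSne hSnu
    rcases lower_total (hSl.actL' hcov a) hSl with hdn | hup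
    · exact lt_of_le_of_ne hdn (hnofix S hSl hSne hSnu)
    · exact absurd ⟨S, hSl, hSne, hSnu,
        lt_of_le_of_ne hup (fun hc => hnofix S hSl hSne hSnu hc.symm)⟩ h1

/-- Case A' (uniformly increasing `a`): contradiction. -/
theorem main_up (hcov : ∀ u v x : G, u < v → x * u < x * v)
    {a b w₁ w₂ : G} {m n : ℕ} (hmn : 1 ≤ m + n) {r k : ℤ} (hk : 0 ≤ k)
    {w : G} {l : List G} (hl : ∀ c ∈ l, c = a ∨ c = b) (hbl : b ∈ l) (hw : w = l.prod)
    {P q : ℤ} (hq : q ≠ 0) (hPq : 0 ≤ P * q) (hPw : a ^ P * w ^ q = 1)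
    (hrel₁ : (w₁ * a ^ m * w₁⁻¹) * b ^ (-r) * (w₂⁻¹ * a ^ n * w₂) * b ^ (r - k) = 1)
    {S₀ : Set G} (hS₀l : IsLowerSet S₀) (hS₀ne : S₀.Nonempty) (hS₀nu : S₀ ≠ Set.univ)
    (hupa : ∀ S : Set G, IsLowerSet S → S.Nonempty → S ≠ Set.univ → S ⊂ actL a S) :
    False := by
  have key : (w₁ * a ^ m * w₁⁻¹) * ((b ^ (-r) * w₂⁻¹) * a ^ n * (b ^ (-r) * w₂⁻¹)⁻¹) = b ^ k := by
    have h2 : (w₁ * a ^ m * w₁⁻¹) * ((b ^ (-r) * w₂⁻¹) * a ^ n * (b ^ (-r) * w₂⁻¹)⁻¹) =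
        ((w₁ * a ^ m * w₁⁻¹) * b ^ (-r) * (w₂⁻¹ * a ^ n * w₂) * b ^ (r - k)) * b ^ k := by
      group
    rw [h2, hrel₁, one_mul]
  have conj : ∀ (g : G) (j : ℕ) (S : Set G), IsLowerSet S → S.Nonempty → S ≠ Set.univ →
      S ⊆ actL (g * a ^ j * g⁻¹) S ∧ (1 ≤ j → S ⊂ actL (g * a ^ j * g⁻¹) S) := by
    intro g j S hSl hSne hSnu
    have hTl : IsLowerSet (actL g⁻¹ S) := hSl.actL' hcov g⁻¹
    have hTne := actL_nonempty g⁻¹ hSne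
    have hTnu := actL_ne_univ g⁻¹ hSnu
    have hT : actL g⁻¹ S ⊂ actL a (actL g⁻¹ S) := hupa _ hTl hTne hTnu
    have hkey : actL (g * a ^ j * g⁻¹) S = actL g (actL (a ^ j) (actL g⁻¹ S)) := by
      rw [actL_mul, actL_mul]
    constructor
    · rw [hkey]
      have h1 : actL g⁻¹ S ⊆ actL (a ^ j) (actL g⁻¹ S) := subset_actL_pow hT.subset j
      have := actL_mono g h1
      rwa [actL_actL_inv] at this
    · intro hj
      rw [hkey]
      have h1 := ssubset_actL_pow hT hj
      have := (actL_ssubset_iff (g := g)).2 h1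
      rwa [actL_actL_inv] at this
  have hbk : ∀ S : Set G, IsLowerSet S → S.Nonempty → S ≠ Set.univ → S ⊂ actL (b ^ k) S := by
    intro S hSl hSne hSnu
    rw [← key, actL_mul]
    have hc2 := conj (b ^ (-r) * w₂⁻¹) n S hSl hSne hSnu
    have hYl : IsLowerSet (actL ((b ^ (-r) * w₂⁻¹) * a ^ n * (b ^ (-r) * w₂⁻¹)⁻¹) S) :=
      hSl.actL' hcov _
    have hYne := actL_nonempty ((b ^ (-r) * w₂⁻¹) * a ^ n * (b ^ (-r) * w₂⁻¹)⁻¹) hSne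
    have hYnu := actL_ne_univ ((b ^ (-r) * w₂⁻¹) * a ^ n * (b ^ (-r) * w₂⁻¹)⁻¹) hSnu
    have hc1 := conj w₁ m _ hYl hYne hYnu
    rcases Nat.lt_or_ge m 1 with hm | hm
    · have hn : 1 ≤ n := by omega
      exact lt_of_lt_of_le (hc2.2 hn) hc1.1
    · exact lt_of_le_of_lt hc2.1 (hc1.2 hm)
  have hk1 : (1 : ℤ) ≤ k := by
    rcases eq_or_lt_of_le hk with hk0 | hk0
    · exfalso
      have := hbk S₀ hS₀l hS₀ne hS₀nu
      rw [← hk0, zpow_zero, actL_one] at this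
      exact this.ne rfl
    · omega
  have hbS : ∀ S : Set G, IsLowerSet S → S.Nonempty → S ≠ Set.univ → S ⊂ actL b S := by
    intro S hSl hSne hSnu
    have hBk := hbk S hSl hSne hSnu
    rcases lower_total (hSl.actL' hcov b) hSl with hdn | hup
    · exact absurd (lt_of_lt_of_le hBk (actL_pow_subset hdn hk)) (lt_irrefl _)
    · refine lt_of_le_of_ne hup (fun hc => ?_)
      have hbfix : b ∈ fixerL S := hc.symm
      have : actL (b ^ k) S = S := actL_eq_of_mem_fixerL (Subgroup.zpow_mem _ hbfix k)
      exact hBk.ne' this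
  have hwS : ∀ S : Set G, IsLowerSet S → S.Nonempty → S ≠ Set.univ → S ⊂ actL w S := by
    rw [hw]
    exact word_up_all hcov hupa hbS l (List.ne_nil_of_mem hbl) hl
  rcases hq.lt_or_gt with hqneg | hqpos
  · have hP : 0 ≤ -P := by
      by_contra hcon
      push_neg at hcon
      have hPpos : 0 < P := by omega
      have : P * q < 0 := mul_neg_of_pos_of_neg hPpos hqneg
      omega
    have hPw' : w ^ (-q) * a ^ (-P) = 1 := by
      have h0 : (a ^ P * w ^ q)⁻¹ = 1 := by rw [hPw]; simp
      rwa [mul_inv_rev, ← zpow_neg, ← zpow_neg] at h0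
    have hq1 : (1 : ℤ) ≤ -q := by omega
    have hZ : S₀ ⊆ actL (a ^ (-P)) S₀ :=
      subset_actL_zpow (hupa S₀ hS₀l hS₀ne hS₀nu).subset hP
    have e : actL (w ^ (-q)) (actL (a ^ (-P)) S₀) = S₀ := by
      rw [← actL_mul, hPw', actL_one]
    have h1 : S₀ ⊂ actL (w ^ (-q)) S₀ :=
      ssubset_actL_zpow (hwS S₀ hS₀l hS₀ne hS₀nu) hq1
    have h2 : actL (w ^ (-q)) S₀ ⊆ actL (w ^ (-q)) (actL (a ^ (-P)) S₀) := actL_mono _ hZ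
    exact absurd (lt_of_lt_of_le h1 (h2.trans e.le)) (lt_irrefl _)
  · have hP : 0 ≤ P := by
      by_contra hcon
      push_neg at hcon
      have : P * q < 0 := mul_neg_of_neg_of_pos hcon hqpos
      omega
    have hq1 : (1 : ℤ) ≤ q := by omega
    have e : actL (a ^ P) (actL (w ^ q) S₀) = S₀ := by
      rw [← actL_mul, hPw, actL_one]
    have h1 : S₀ ⊂ actL (w ^ q) S₀ := ssubset_actL_zpow (hwS S₀ hS₀l hS₀ne hS₀nu) hq1
    have hYl : IsLowerSet (actL (w ^ q) S₀) := hS₀l.actL' hcov _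
    have hYne := actL_nonempty (w ^ q) hS₀ne
    have hYnu := actL_ne_univ (w ^ q) hS₀nu
    have h2 : actL (w ^ q) S₀ ⊆ actL (a ^ P) (actL (w ^ q) S₀) :=
      subset_actL_zpow (hupa _ hYl hYne hYnu).subset hP
    exact absurd (lt_of_lt_of_le h1 (h2.trans e.le)) (lt_irrefl _)

end Order

end LOAux


/-- A (nontrivial) group is left-orderable if it admits a left-invariant
strict total order; by convention the trivial group is not left-orderable. -/
def IsLeftOrderable (G : Type*) [Group G] : Prop :=
  Nontrivial G ∧ ∃ lt : G → G → Prop,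
    IsStrictTotalOrder G lt ∧ ∀ f g h : G, lt g h → lt (f * g) (f * h)

/-- A countable group generated by `a, b` satisfying the
generalized Baumslag-Solitar relator, the commutation `aL = La` for
`L = a^{-s} w a^{-t}` (with `w` a positive word in `a, b` containing `b`),
and `a^p L^q = 1` with `q ≠ 0`, `p/q ≥ s + t`, is not left-orderable. -/
theorem stmt9 {G : Type*} [Group G] [Countable G] (a b : G)
    (hgen : Subgroup.closure ({a, b} : Set G) = ⊤)
    (w₁ w₂ : G) (m n : ℕ) (hmn : 1 ≤ m + n) (r k : ℤ) (hk : 0 ≤ k)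
    (w : G) (l : List G) (hl : ∀ c ∈ l, c = a ∨ c = b) (hbl : b ∈ l)
    (hw : w = l.prod)
    (s t p q : ℤ) (hq : q ≠ 0) (hpq : (s + t : ℚ) ≤ (p : ℚ) / (q : ℚ))
    (L : G) (hL : L = a ^ (-s) * w * a ^ (-t))
    (hrel₁ : (w₁ * a ^ m * w₁⁻¹) * b ^ (-r) * (w₂⁻¹ * a ^ n * w₂) * b ^ (r - k) = 1)
    (hrel₂ : a * L = L * a)
    (hrel₃ : a ^ p * L ^ q = 1) :
    ¬ IsLeftOrderable G := by
  rintro ⟨hnt, lt, hsto, hinv⟩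
  haveI := hsto
  letI : DecidableRel lt := fun x y => Classical.propDecidable _
  letI : LinearOrder G := linearOrderOfSTO lt
  have hcov : ∀ u v x : G, u < v → x * u < x * v := fun u v x h => hinv x u v h
  -- algebraic consequences
  have hcomm : a * w = w * a := by
    have h := hrel₂
    rw [hL] at h
    have h1 : a ^ (-s) * (a * w) * a ^ (-t) = a ^ (-s) * (w * a) * a ^ (-t) := by
      have e1 : a ^ (-s) * (a * w) * a ^ (-t) = a * (a ^ (-s) * w * a ^ (-t)) := by group
      have e2 : a ^ (-s) * (w * a) * a ^ (-t) = a ^ (-s) * w * a ^ (-t) * a := by group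
      rw [e1, e2, h]
    exact mul_left_cancel (mul_right_cancel h1)
  have hcw : Commute a w := hcomm
  have hLrw : L = a ^ (-(s + t)) * w := by
    rw [hL]
    have e3 : w * a ^ (-t) = a ^ (-t) * w := (hcw.symm.zpow_right (-t)).eq
    rw [mul_assoc, e3, ← mul_assoc, ← zpow_add]
    have : -s + -t = -(s + t) := by ring
    rw [this]
  have hLq : L ^ q = a ^ (-(s + t) * q) * w ^ q := by
    rw [hLrw, (hcw.zpow_left (-(s + t))).mul_zpow, ← zpow_mul]
  have hPw : a ^ (p - (s + t) * q) * w ^ q = 1 := by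
    have h3 := hrel₃
    rw [hLq, ← mul_assoc, ← zpow_add] at h3
    have : p + -(s + t) * q = p - (s + t) * q := by ring
    rwa [this] at h3
  have hPq : 0 ≤ (p - (s + t) * q) * q := by
    have hq0 : (q : ℚ) ≠ 0 := Int.cast_ne_zero.2 hq
    have h0 : (0 : ℚ) ≤ (p : ℚ) / q - ((s : ℚ) + t) := sub_nonneg.2 hpq
    have h1 : (0 : ℚ) ≤ ((p : ℚ) / q - ((s : ℚ) + t)) * q ^ 2 := mul_nonneg h0 (sq_nonneg _)
    have h2 : ((p : ℚ) / q - ((s : ℚ) + t)) * q ^ 2 = ((p : ℚ) - (s + t) * q) * q := by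
      field_simp
    rw [h2] at h1
    exact_mod_cast h1
  -- base proper lower set
  have hS₀l : IsLowerSet {x : G | x ≤ 1} := fun x y hyx hx => le_trans hyx hx
  have hS₀ne : ({x : G | x ≤ 1} : Set G).Nonempty := ⟨1, Set.mem_setOf.2 (le_refl 1)⟩
  have hS₀nu : ({x : G | x ≤ 1} : Set G) ≠ Set.univ := by
    obtain ⟨g, hg⟩ := exists_ne (1 : G)
    intro hc
    have hall : ∀ x : G, x ≤ 1 := fun x => by
      have : x ∈ ({x : G | x ≤ 1} : Set G) := by rw [hc]; exact Set.mem_univ x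
      exact this
    rcases lt_trichotomy g 1 with h | h | h
    · have h1 : (1 : G) < g⁻¹ := by
        have := hcov g 1 g⁻¹ h
        rwa [inv_mul_cancel, mul_one] at this
      exact absurd (hall g⁻¹) (not_le.2 h1)
    · exact hg h
    · exact absurd (hall g) (not_le.2 h)
  by_cases hfixex : ∃ S : Set G, IsLowerSet S ∧ S.Nonempty ∧ S ≠ Set.univ ∧ actL a S = S
  · obtain ⟨S, h1, h2, h3, h4⟩ := hfixex
    exact main_fixed hcov hgen hl hbl hw hq hPw h1 h2 h3 h4
  · push_neg at hfixex
    rcases uniform hcov hfixex with hup | hdn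
    · exact main_up hcov hmn hk hl hbl hw hq hPq hPw hrel₁ hS₀l hS₀ne hS₀nu hup
    · -- apply main_up to the inverse generators
      set l' : List G := (l.map fun x => x⁻¹).reverse with hl'def
      have hl' : ∀ c ∈ l', c = a⁻¹ ∨ c = b⁻¹ := by
        intro c hc
        rw [hl'def, List.mem_reverse, List.mem_map] at hc
        obtain ⟨d, hd, rfl⟩ := hc
        rcases hl d hd with rfl | rfl
        · exact Or.inl rfl
        · exact Or.inr rfl
      have hbl' : b⁻¹ ∈ l' := by
        rw [hl'def, List.mem_reverse, List.mem_map]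
        exact ⟨b, hbl, rfl⟩
      have hw' : w⁻¹ = l'.prod := by
        rw [hl'def, hw]
        exact List.prod_inv_reverse l
      have hmn' : 1 ≤ n + m := by omega
      have hPq' : 0 ≤ (p - (s + t) * q) * q := hPq
      have hswap : w ^ q * a ^ (p - (s + t) * q) = 1 := by
        have h1 : w ^ q = a ^ (-(p - (s + t) * q)) := by
          have h5 : a ^ (-(p - (s + t) * q)) * (a ^ (p - (s + t) * q) * w ^ q)
              = a ^ (-(p - (s + t) * q)) := by rw [hPw, mul_one]
          rw [← h5]
          group
        rw [h1, ← zpow_add]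
        simp
      have hPw' : (a⁻¹) ^ (p - (s + t) * q) * (w⁻¹) ^ q = 1 := by
        have e : (a⁻¹) ^ (p - (s + t) * q) * (w⁻¹) ^ q
            = (w ^ q * a ^ (p - (s + t) * q))⁻¹ := by
          rw [mul_inv_rev, inv_zpow, inv_zpow]
        rw [e, hswap, inv_one]
      have hrel₁' : (w₂⁻¹ * (a⁻¹) ^ n * (w₂⁻¹)⁻¹) * (b⁻¹) ^ (-r) *
          ((w₁⁻¹)⁻¹ * (a⁻¹) ^ m * w₁⁻¹) * (b⁻¹) ^ (r - k) = 1 := by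
        have h2 : (w₂⁻¹ * (a⁻¹) ^ n * (w₂⁻¹)⁻¹) * (b⁻¹) ^ (-r) *
            ((w₁⁻¹)⁻¹ * (a⁻¹) ^ m * w₁⁻¹) * (b⁻¹) ^ (r - k) =
            b ^ (r - k) * ((w₁ * a ^ m * w₁⁻¹) * b ^ (-r) * (w₂⁻¹ * a ^ n * w₂)
              * b ^ (r - k))⁻¹ * b ^ (k - r) := by
          group
        rw [h2, hrel₁]
        group
      have hup' : ∀ S : Set G, IsLowerSet S → S.Nonempty → S ≠ Set.univ →
          S ⊂ actL a⁻¹ S := fun S h1 h2 h3 => actL_swap_inv_ssubset (hdn S h1 h2 h3)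
      exact main_up hcov hmn' hk hl' hbl' hw' hq hPq' hPw' hrel₁' hS₀l hS₀ne hS₀nu hup'
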